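/- Define the reallocatable amount RA(j, S, â) = Σ_{i∈S} max(0, −τ_i(â)) + max(0, −τ_j(â)), where S_j(â) = { i ≠ j : U_i(b) = U_i(â) and τ_i(â) < 0 }. Suppose RA(j, S_j(â), â) > U_j(b) − U_j(â), and let R̄ = { i ≠ j : τ_i(â) > 0 } satisfy Σ_{i∈R̄} τ_i(â) ≥ RA(j, S_j(â), â). Then there exist nonnegative reals (β_i)_{i∈R̄} with β_i ≤ τ_i(â) and Σ_{i∈R̄} β_i = RA(j, S_j(â), â), and the scheme τ' given by τ'_j(â) = τ_j(â) + RA(j, S_j(â), â), τ'_i(â) = τ_i(â) − β_i for i ∈ R̄, τ' = τ elsewhere, is budget balanced and satisfies u_j(â)+τ'_j(â) > u_j(b)+τ_j(b). -/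

import Mathlib

/-- sufficiency half of Proposition 4: when the reallocatable
amount `RA(j, S_j(â), â)` exceeds agent `j`'s utility gap between `b` and `â`,
there is a budget-balanced redistribution (funded by receivers `R̄` at `â`)
making `j` strictly prefer `â` under `τ'` to `b` under `τ`. -/
theorem RA_sufficiency
    {N A : Type} [Fintype N] [Fintype A] [DecidableEq N] [DecidableEq A]
    (u τ : N → A → ℝ) (b ahat : A) (j : N)
    (hbb : ∀ a : A, ∑ i, τ i a = 0)
    (hfc : ∀ (i : N) (a : A), u i b + τ i b ≥ u i a + τ i a)
    (hne : ahat ≠ b)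
    (Sj : Finset N)
    (hSj : ∀ i : N, i ∈ Sj ↔
      i ≠ j ∧ u i b + τ i b = u i ahat + τ i ahat ∧ τ i ahat < 0)
    (Rbar : Finset N)
    (hRbar : ∀ i : N, i ∈ Rbar ↔ i ≠ j ∧ τ i ahat > 0)
    (RA : ℝ)
    (hRA : RA = (∑ i ∈ Sj, max 0 (-(τ i ahat))) + max 0 (-(τ j ahat)))
    (hgap : RA > (u j b + τ j b) - (u j ahat + τ j ahat))
    (hfund : ∑ i ∈ Rbar, τ i ahat ≥ RA) :
    ∃ β : N → ℝ,
      (∀ i ∈ Rbar, 0 ≤ β i ∧ β i ≤ τ i ahat) ∧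
      (∑ i ∈ Rbar, β i = RA) ∧
      ∀ τ' : N → A → ℝ,
        (∀ (k : N) (a : A), τ' k a =
          if a = ahat then
            (if k = j then τ j ahat + RA
             else if k ∈ Rbar then τ k ahat - β k
             else τ k ahat)
          else τ k a) →
        (∀ a : A, ∑ i, τ' i a = 0) ∧
        (u j ahat + τ' j ahat > u j b + τ j b) := by
  have hgap0 : (0:ℝ) ≤ (u j b + τ j b) - (u j ahat + τ j ahat) := by
    have := hfc j ahat; linarith
  have hRApos : 0 < RA := by linarith
  set S : ℝ := ∑ i ∈ Rbar, τ i ahat with hS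
  have hSpos : 0 < S := lt_of_lt_of_le hRApos hfund
  have hSne : S ≠ 0 := ne_of_gt hSpos
  refine ⟨fun i => if i ∈ Rbar then τ i ahat * (RA / S) else 0, ?_, ?_, ?_⟩
  · intro i hi
    simp only [hi, if_true]
    have hτpos : 0 < τ i ahat := ((hRbar i).1 hi).2
    constructor
    · positivity
    · have h1 : RA / S ≤ 1 := by
        rw [div_le_one hSpos]; exact hfund
      nlinarith
  · have : ∑ i ∈ Rbar, (if i ∈ Rbar then τ i ahat * (RA / S) else 0)
        = ∑ i ∈ Rbar, τ i ahat * (RA / S) := by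
      apply Finset.sum_congr rfl; intro i hi; simp [hi]
    rw [this, ← Finset.sum_mul, ← hS]
    field_simp
  · intro τ' hτ'
    have hjR : j ∉ Rbar := by
      intro h; exact ((hRbar j).1 h).1 rfl
    constructor
    · intro a
      by_cases ha : a = ahat
      · subst ha
        have key : ∀ k : N, τ' k a =
            τ k a + (if k = j then RA else 0)
              - (if k ∈ Rbar then (if k ∈ Rbar then τ k a * (RA / S) else 0) else 0) := by
          intro k
          rw [hτ' k a]
          by_cases hk : k = j
          · subst hk; simp [hjR]
          · by_cases hkR : k ∈ Rbar <;> simp [hk, hkR]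
        calc ∑ i, τ' i a = ∑ i, (τ i a + (if i = j then RA else 0)
              - (if i ∈ Rbar then (if i ∈ Rbar then τ i a * (RA / S) else 0) else 0)) := by
                exact Finset.sum_congr rfl fun i _ => key i
          _ = (∑ i, τ i a) + (∑ i, (if i = j then RA else 0))
              - ∑ i, (if i ∈ Rbar then (if i ∈ Rbar then τ i a * (RA / S) else 0) else 0) := by
                rw [Finset.sum_sub_distrib, Finset.sum_add_distrib]
          _ = 0 := by
                rw [hbb a, Finset.sum_ite_eq' Finset.univ j (fun _ => RA)]
                have h2 : ∑ i, (if i ∈ Rbar then (if i ∈ Rbar then τ i a * (RA / S) else 0) else 0)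
                    = ∑ i ∈ Rbar, τ i a * (RA / S) := by
                  rw [Finset.sum_ite_mem, Finset.univ_inter]
                  exact Finset.sum_congr rfl fun i hi => by simp [hi]
                rw [h2, ← Finset.sum_mul, ← hS]
                field_simp
                simp
      · have : ∑ i, τ' i a = ∑ i, τ i a :=
          Finset.sum_congr rfl fun i _ => by rw [hτ' i a, if_neg ha]
        rw [this, hbb a]
    · have : τ' j ahat = τ j ahat + RA := by rw [hτ' j ahat]; simp
      rw [this]; linarith
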